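/- Let ι be an index type, w : ι → ℝ with w ξ ≥ 1 for all ξ, satisfying the two-sided Weyl law with exponent Q > 0 (finite level sets, c₁·λ^Q ≤ N(λ) ≤ c₂·λ^Q for λ ≥ 1). Let q > 0, let m > −Q, and let σ : ι → ℝ satisfy a·(w ξ)^m ≤ σ ξ ≤ b·(w ξ)^m for all ξ, for some constants 0 < a ≤ b (positivity, L-ellipticity and the order-m symbol estimate). Then there exist constants c, C > 0 such that for all t ∈ (0,1]: c·t^{−(Q+m)/q} ≤ ∑'_ξ σ ξ · exp(−t·(w ξ)^q) ≤ C·t^{−(Q+m)/q}. (This is the two-sided heat-trace asymptotic Tr(A e^{−t𝓜_q}) ≍ t^{−(Q+m)/q} of the paper's theorem for self-adjoint L and positive L-elliptic symbols of order m > −Q.) -/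
import Mathlib

set_option maxHeartbeats 1000000

open Real Finset Nat

-- exponent sandwich helper
private lemma rpow_sandwich_upper {K x z y m : ℝ} (hx : 0 < x) (hK : 1 ≤ K)
    (hxz : x ≤ z) (hzy : z ≤ y) (hyK : y ≤ K * x) :
    z ^ m ≤ K ^ |m| * x ^ m := by
  have hz : 0 < z := lt_of_lt_of_le hx hxz
  have hK0 : (0:ℝ) < K := lt_of_lt_of_le one_pos hK
  rcases le_or_gt 0 m with hm | hm
  · have habs : |m| = m := abs_of_nonneg hm
    calc z ^ m ≤ (K * x) ^ m := Real.rpow_le_rpow hz.le (hzy.trans hyK) hm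
    _ = K ^ m * x ^ m := Real.mul_rpow hK0.le hx.le
    _ ≤ K ^ |m| * x ^ m := by rw [habs]
  · have habs : |m| = -m := abs_of_neg hm
    have h1 : z ^ m ≤ x ^ m := Real.rpow_le_rpow_of_nonpos hx hxz hm.le
    have h2 : (1:ℝ) ≤ K ^ |m| := Real.one_le_rpow hK (abs_nonneg m)
    nlinarith [Real.rpow_pos_of_pos hx m]

private lemma rpow_sandwich_lower {K x z y m : ℝ} (hx : 0 < x) (hK : 1 ≤ K)
    (hxz : x ≤ z) (hzy : z ≤ y) (hyK : y ≤ K * x) :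
    K ^ (-|m|) * y ^ m ≤ z ^ m := by
  have hz : 0 < z := lt_of_lt_of_le hx hxz
  have hy : 0 < y := lt_of_lt_of_le hz hzy
  have hK0 : (0:ℝ) < K := lt_of_lt_of_le one_pos hK
  rcases le_or_gt 0 m with hm | hm
  · have habs : |m| = m := abs_of_nonneg hm
    have h1 : y / K ≤ z := by
      calc y / K ≤ x := by rw [div_le_iff₀ hK0]; linarith
      _ ≤ z := hxz
    have h2 : (y / K) ^ m ≤ z ^ m :=
      Real.rpow_le_rpow (by positivity) h1 hm
    calc K ^ (-|m|) * y ^ m = (y / K) ^ m := by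
          rw [habs, Real.div_rpow hy.le hK0.le, Real.rpow_neg hK0.le, div_eq_inv_mul]
    _ ≤ z ^ m := h2
  · have habs : |m| = -m := abs_of_neg hm
    have h1 : y ^ m ≤ z ^ m := Real.rpow_le_rpow_of_nonpos hz hzy hm.le
    have h2 : K ^ (-|m|) ≤ 1 :=
      Real.rpow_le_one_of_one_le_of_nonpos hK (neg_nonpos.mpr (abs_nonneg m))
    nlinarith [Real.rpow_pos_of_pos hy m]

private lemma two_pow_rpow (k : ℕ) (m : ℝ) : ((2:ℝ) ^ k) ^ m = ((2:ℝ) ^ m) ^ k := by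
  rw [← Real.rpow_natCast (2:ℝ) k, ← Real.rpow_natCast ((2:ℝ) ^ m) k,
    ← Real.rpow_mul (by norm_num), ← Real.rpow_mul (by norm_num), mul_comm]

-- the scalar dyadic sum bound
private lemma dyadic_sum_bound (r q : ℝ) (hr : 0 < r) (hq : 0 < q) :
    ∃ C₀ : ℝ, 0 < C₀ ∧ ∀ t : ℝ, 0 < t → t ≤ 1 → ∀ M : ℕ,
      ∑ k ∈ Finset.range M, ((2:ℝ) ^ r) ^ k * Real.exp (-(t * ((2:ℝ) ^ q) ^ k))
        ≤ C₀ * t ^ (-(r / q)) := by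
  set x : ℝ := (2:ℝ) ^ r with hxdef
  have hx1 : 1 < x := by
    rw [hxdef, Real.one_lt_rpow_iff_of_pos two_pos]
    exact Or.inl ⟨one_lt_two, hr⟩
  have hx0 : 0 < x := lt_trans one_pos hx1
  set n : ℕ := ⌈(r + 1) / q⌉₊ + 1 with hndef
  have hn : r + 1 ≤ q * n := by
    have h1 : (r + 1) / q ≤ (n : ℝ) := by
      calc (r + 1) / q ≤ (⌈(r + 1) / q⌉₊ : ℝ) := Nat.le_ceil _
      _ ≤ (n : ℝ) := by rw [hndef]; push_cast; linarith
    calc r + 1 = ((r + 1) / q) * q := by field_simp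
    _ ≤ (n : ℝ) * q := by
        apply mul_le_mul_of_nonneg_right h1 hq.le
    _ = q * n := by ring
  have hnfac : (1:ℝ) ≤ (n ! : ℝ) := by
    exact_mod_cast Nat.one_le_iff_ne_zero.mpr (Nat.factorial_ne_zero n)
  refine ⟨x * (1 / (x - 1) + 2 * (n ! : ℝ)), by
    have : 0 < x - 1 := by linarith
    positivity, ?_⟩
  intro t ht ht1 M
  set lam : ℝ := t ^ (-(1/q)) with hlamdef
  have hlam1 : 1 ≤ lam :=
    Real.one_le_rpow_of_pos_of_le_one_of_nonpos ht ht1 (by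
      apply neg_nonpos.mpr; positivity)
  have hlam0 : 0 < lam := lt_of_lt_of_le one_pos hlam1
  set L : ℕ := ⌊Real.logb 2 lam⌋₊ with hLdef
  have h2L : (2:ℝ) ^ L ≤ lam := by
    have hlog0 : 0 ≤ Real.logb 2 lam := Real.logb_nonneg one_lt_two hlam1
    calc (2:ℝ) ^ L = (2:ℝ) ^ (L : ℝ) := (Real.rpow_natCast _ _).symm
    _ ≤ (2:ℝ) ^ Real.logb 2 lam :=
        Real.rpow_le_rpow_of_exponent_le one_le_two (Nat.floor_le hlog0)
    _ = lam := Real.rpow_logb two_pos (by norm_num) hlam0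
  have hlamL : lam < (2:ℝ) ^ (L + 1) := by
    calc lam = (2:ℝ) ^ Real.logb 2 lam := (Real.rpow_logb two_pos (by norm_num) hlam0).symm
    _ < (2:ℝ) ^ ((L : ℝ) + 1) :=
        Real.rpow_lt_rpow_of_exponent_lt one_lt_two (Nat.lt_floor_add_one _)
    _ = (2:ℝ) ^ (L + 1) := by
        rw [← Real.rpow_natCast (2:ℝ) (L+1)]; push_cast; ring_nf
  have hlamr : lam ^ r = t ^ (-(r / q)) := by
    rw [hlamdef, ← Real.rpow_mul ht.le]
    norm_num
    ring_nf
  set y : ℝ := (2:ℝ) ^ q with hydef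
  have hy0 : 0 < y := Real.rpow_pos_of_pos two_pos q
  have ht_eq : lam ^ q = t⁻¹ := by
    rw [hlamdef, ← Real.rpow_mul ht.le, ← Real.rpow_neg_one t]
    congr 1
    field_simp
  have htail : ∀ j : ℕ, y ^ j ≤ t * y ^ (L + 1 + j) := by
    intro j
    have h1 : lam ^ q ≤ ((2:ℝ) ^ (L+1)) ^ q := Real.rpow_le_rpow hlam0.le hlamL.le hq.le
    have h2 : ((2:ℝ) ^ (L+1) : ℝ) ^ q = y ^ (L+1) := two_pow_rpow (L+1) q
    have h3 : t⁻¹ ≤ y ^ (L+1) := by rw [← ht_eq]; rw [h2] at h1; exact h1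
    have h4 : 1 ≤ t * y ^ (L+1) := by
      have h5 := mul_le_mul_of_nonneg_left h3 ht.le
      rwa [mul_inv_cancel₀ ht.ne'] at h5
    calc y ^ j = 1 * y ^ j := (one_mul _).symm
    _ ≤ (t * y ^ (L+1)) * y ^ j :=
        mul_le_mul_of_nonneg_right h4 (pow_nonneg hy0.le j)
    _ = t * y ^ (L + 1 + j) := by rw [pow_add]; ring
  have hyn : (2:ℝ) ^ (r+1) ≤ y ^ n := by
    have h2 : y ^ n = (2:ℝ) ^ (q * n) := by
      rw [hydef, ← Real.rpow_natCast ((2:ℝ) ^ q) n, ← Real.rpow_mul (by norm_num : (0:ℝ) ≤ 2)]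
    rw [h2]
    exact Real.rpow_le_rpow_of_exponent_le one_le_two hn
  have hterm : ∀ j : ℕ, x ^ (L+1+j) * Real.exp (-(t * y ^ (L+1+j)))
      ≤ (x ^ (L+1) * (n ! : ℝ)) * (1/2) ^ j := by
    intro j
    have hyj : 0 < y ^ j := pow_pos hy0 j
    have hexp1 : Real.exp (-(t * y ^ (L+1+j))) ≤ Real.exp (-(y ^ j)) :=
      Real.exp_le_exp.mpr (by linarith [htail j])
    have h5 : (y ^ j) ^ n / (n ! : ℝ) ≤ Real.exp (y ^ j) :=
      Real.pow_div_factorial_le_exp _ hyj.le n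
    have h6 : (y ^ j) ^ n ≤ (n ! : ℝ) * Real.exp (y ^ j) := by
      rw [div_le_iff₀ (by positivity : (0:ℝ) < (n ! : ℝ))] at h5
      linarith [h5]
    have hexp2 : Real.exp (-(y ^ j)) ≤ (n ! : ℝ) / (y ^ j) ^ n := by
      rw [Real.exp_neg, inv_eq_one_div,
        div_le_div_iff₀ (Real.exp_pos _) (by positivity)]
      nlinarith [h6]
    have h7 : ((2:ℝ) ^ (r+1)) ^ j ≤ (y ^ j) ^ n := by
      rw [← pow_mul, mul_comm j n, pow_mul]
      exact pow_le_pow_left₀ (by positivity) hyn j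
    have hexp3 : Real.exp (-(t * y ^ (L+1+j))) ≤ (n ! : ℝ) / ((2:ℝ) ^ (r+1)) ^ j := by
      refine (hexp1.trans hexp2).trans ?_
      exact div_le_div_of_nonneg_left (by positivity) (by positivity) h7
    have hx2 : (2:ℝ) ^ (r+1) = x * 2 := by
      rw [hxdef, Real.rpow_add two_pos, Real.rpow_one]
    calc x ^ (L+1+j) * Real.exp (-(t * y ^ (L+1+j)))
        ≤ x ^ (L+1+j) * ((n ! : ℝ) / ((2:ℝ) ^ (r+1)) ^ j) :=
          mul_le_mul_of_nonneg_left hexp3 (by positivity)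
    _ = (x ^ (L+1) * (n ! : ℝ)) * (x ^ j / (x * 2) ^ j) := by
          rw [pow_add, hx2]; ring
    _ = (x ^ (L+1) * (n ! : ℝ)) * (1/2) ^ j := by
          congr 1
          rw [mul_pow, div_pow, one_pow]
          field_simp
  have part1 : ∑ k ∈ Finset.range (L+1), x ^ k * Real.exp (-(t * y ^ k))
      ≤ x ^ (L+1) * (1 / (x-1)) := by
    have h8 : ∀ k ∈ Finset.range (L+1), x ^ k * Real.exp (-(t * y ^ k)) ≤ x ^ k := by
      intro k _
      have h9 : Real.exp (-(t * y ^ k)) ≤ 1 := by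
        rw [Real.exp_le_one_iff]
        have : 0 < y ^ k := pow_pos hy0 k
        nlinarith
      nlinarith [pow_pos hx0 k, Real.exp_pos (-(t * y ^ k))]
    calc ∑ k ∈ Finset.range (L+1), x ^ k * Real.exp (-(t * y ^ k))
        ≤ ∑ k ∈ Finset.range (L+1), x ^ k := Finset.sum_le_sum h8
    _ = (x ^ (L+1) - 1) / (x - 1) := geom_sum_eq (ne_of_gt hx1) (L+1)
    _ ≤ x ^ (L+1) * (1 / (x-1)) := by
        rw [mul_one_div]
        have hx1' : 0 < x - 1 := by linarith
        gcongr
        linarith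
  have hxL : x ^ (L+1) ≤ x * lam ^ r := by
    have h10 : x ^ L ≤ lam ^ r := by
      have := Real.rpow_le_rpow (by positivity : (0:ℝ) ≤ (2:ℝ) ^ L) h2L hr.le
      rwa [two_pow_rpow L r, ← hxdef] at this
    calc x ^ (L+1) = x * x ^ L := by ring
    _ ≤ x * lam ^ r := mul_le_mul_of_nonneg_left h10 hx0.le
  have part2 : ∀ M' : ℕ, ∑ j ∈ Finset.range M', x ^ (L+1+j) * Real.exp (-(t * y ^ (L+1+j)))
      ≤ x ^ (L+1) * (n ! : ℝ) * 2 := by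
    intro M'
    have h11 : ∑ j ∈ Finset.range M', (1/2 : ℝ) ^ j ≤ 2 := by
      rw [geom_sum_eq (by norm_num : (1/2:ℝ) ≠ 1) M']
      have h12 : (0:ℝ) ≤ (1/2:ℝ) ^ M' := by positivity
      have h13 : ((1/2:ℝ) ^ M' - 1) / (1/2 - 1) = (1 - (1/2:ℝ) ^ M') * 2 := by ring
      rw [h13]; nlinarith
    calc ∑ j ∈ Finset.range M', x ^ (L+1+j) * Real.exp (-(t * y ^ (L+1+j)))
        ≤ ∑ j ∈ Finset.range M', (x ^ (L+1) * (n ! : ℝ)) * (1/2) ^ j :=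
          Finset.sum_le_sum (fun j _ => hterm j)
    _ = (x ^ (L+1) * (n ! : ℝ)) * ∑ j ∈ Finset.range M', (1/2:ℝ) ^ j := by
          rw [← Finset.mul_sum]
    _ ≤ (x ^ (L+1) * (n ! : ℝ)) * 2 := mul_le_mul_of_nonneg_left h11 (by positivity)
  have hfpos : ∀ i : ℕ, 0 ≤ x ^ i * Real.exp (-(t * y ^ i)) := by
    intro i; positivity
  calc ∑ k ∈ Finset.range M, x ^ k * Real.exp (-(t * y ^ k))
      ≤ ∑ k ∈ Finset.range ((L+1) + M), x ^ k * Real.exp (-(t * y ^ k)) := by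
        apply Finset.sum_le_sum_of_subset_of_nonneg
        · exact Finset.range_subset_range.mpr (Nat.le_add_left M (L+1))
        · intro i _ _; exact hfpos i
  _ = (∑ k ∈ Finset.range (L+1), x ^ k * Real.exp (-(t * y ^ k)))
      + ∑ j ∈ Finset.range M, x ^ (L+1+j) * Real.exp (-(t * y ^ (L+1+j))) :=
        Finset.sum_range_add _ (L+1) M
  _ ≤ x ^ (L+1) * (1 / (x-1)) + x ^ (L+1) * (n ! : ℝ) * 2 :=
        add_le_add part1 (part2 M)
  _ ≤ (x * lam ^ r) * (1 / (x-1)) + (x * lam ^ r) * (n ! : ℝ) * 2 := by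
        have hx1' : 0 < x - 1 := by linarith
        have h14 : 0 < 1 / (x-1) := by positivity
        have h15 : (0:ℝ) < (n ! : ℝ) := by positivity
        nlinarith [hxL]
  _ = x * (1 / (x - 1) + 2 * (n ! : ℝ)) * lam ^ r := by ring
  _ = x * (1 / (x - 1) + 2 * (n ! : ℝ)) * t ^ (-(r / q)) := by rw [hlamr]

theorem heat_trace_two_sided_asymp_order_m
    {ι : Type*} (w : ι → ℝ) (hw : ∀ ξ, 1 ≤ w ξ)
    (hfin : ∀ lam : ℝ, 1 ≤ lam → {ξ | w ξ ≤ lam}.Finite)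
    (Q : ℝ) (hQ : 0 < Q) (c₁ c₂ : ℝ) (hc₁ : 0 < c₁) (hc₂ : 0 < c₂)
    (hN : ∀ lam : ℝ, ∀ _ : 1 ≤ lam,
      c₁ * lam ^ Q ≤ (Nat.card {ξ // w ξ ≤ lam} : ℝ) ∧
      (Nat.card {ξ // w ξ ≤ lam} : ℝ) ≤ c₂ * lam ^ Q)
    (q : ℝ) (hq : 0 < q) (m : ℝ) (hm : -Q < m)
    (σ : ι → ℝ) (a b : ℝ) (ha : 0 < a) (hab : a ≤ b)
    (hσ : ∀ ξ, a * (w ξ) ^ m ≤ σ ξ ∧ σ ξ ≤ b * (w ξ) ^ m) :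
    ∃ c C : ℝ, 0 < c ∧ 0 < C ∧ ∀ t : ℝ, 0 < t → t ≤ 1 →
      c * t ^ (-((Q + m) / q)) ≤ (∑' ξ, σ ξ * Real.exp (-t * (w ξ) ^ q)) ∧
      (∑' ξ, σ ξ * Real.exp (-t * (w ξ) ^ q)) ≤ C * t ^ (-((Q + m) / q)) := by
  have hb : 0 < b := lt_of_lt_of_le ha hab
  have hr : 0 < Q + m := by linarith
  obtain ⟨C₀, hC₀, hC₀b⟩ := dyadic_sum_bound (Q + m) q hr hq
  have hwpos : ∀ ξ, 0 < w ξ := fun ξ => lt_of_lt_of_le one_pos (hw ξ)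
  classical
  have hσpos : ∀ ξ, 0 < σ ξ := fun ξ =>
    lt_of_lt_of_le (mul_pos ha (Real.rpow_pos_of_pos (hwpos ξ) m)) (hσ ξ).1
  have htermnn : ∀ (t : ℝ) ξ, 0 ≤ σ ξ * Real.exp (-t * w ξ ^ q) := by
    intro t ξ
    have := hσpos ξ
    positivity
  -- dyadic shells
  set g : ι → ℕ := fun ξ => Nat.log 2 ⌊w ξ⌋₊ with hgdef
  have hshell : ∀ ξ, (2:ℝ) ^ (g ξ) ≤ w ξ ∧ w ξ ≤ (2:ℝ) ^ (g ξ + 1) := by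
    intro ξ
    have hw0 : (0:ℝ) ≤ w ξ := (hwpos ξ).le
    have hfl1 : 1 ≤ ⌊w ξ⌋₊ := Nat.le_floor (by exact_mod_cast hw ξ)
    constructor
    · calc ((2:ℝ) ^ g ξ) = ((2 ^ g ξ : ℕ) : ℝ) := by push_cast; ring
      _ ≤ (⌊w ξ⌋₊ : ℝ) := by exact_mod_cast Nat.pow_log_le_self 2 (by omega)
      _ ≤ w ξ := Nat.floor_le hw0
    · have h1 : ⌊w ξ⌋₊ < 2 ^ (g ξ + 1) := Nat.lt_pow_succ_log_self (by norm_num) _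
      have h2 : w ξ < (⌊w ξ⌋₊ : ℝ) + 1 := Nat.lt_floor_add_one _
      have h3 : (⌊w ξ⌋₊ : ℝ) + 1 ≤ ((2:ℝ) ^ (g ξ + 1)) := by
        have : (⌊w ξ⌋₊ + 1 : ℕ) ≤ 2 ^ (g ξ + 1) := h1
        calc (⌊w ξ⌋₊ : ℝ) + 1 = ((⌊w ξ⌋₊ + 1 : ℕ) : ℝ) := by push_cast; ring
        _ ≤ ((2 ^ (g ξ + 1) : ℕ) : ℝ) := by exact_mod_cast this
        _ = (2:ℝ) ^ (g ξ + 1) := by push_cast; ring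
      linarith
  set D : ℝ := (c₂ * (2:ℝ) ^ Q) * (b * (2:ℝ) ^ |m|) with hDdef
  have h2Q : (0:ℝ) < (2:ℝ) ^ Q := Real.rpow_pos_of_pos two_pos Q
  have h2m : (0:ℝ) < (2:ℝ) ^ |m| := Real.rpow_pos_of_pos two_pos |m|
  have hD : 0 < D := by positivity
  -- the key finite-sum upper bound
  have key : ∀ t : ℝ, 0 < t → t ≤ 1 → ∀ F : Finset ι,
      ∑ ξ ∈ F, σ ξ * Real.exp (-t * w ξ ^ q) ≤ (D * C₀) * t ^ (-((Q + m) / q)) := by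
    intro t ht ht1 F
    classical
    set M : ℕ := F.sup g + 1 with hMdef
    have hmaps : ∀ ξ ∈ F, g ξ ∈ Finset.range M := by
      intro ξ hξ
      simp only [Finset.mem_range, hMdef]
      exact Nat.lt_succ_of_le (Finset.le_sup hξ)
    rw [← Finset.sum_fiberwise_of_maps_to hmaps (fun ξ => σ ξ * Real.exp (-t * w ξ ^ q))]
    have hinner : ∀ k ∈ Finset.range M,
        ∑ ξ ∈ F.filter (fun ξ => g ξ = k), σ ξ * Real.exp (-t * w ξ ^ q)
          ≤ D * (((2:ℝ) ^ (Q + m)) ^ k * Real.exp (-(t * ((2:ℝ) ^ q) ^ k))) := by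
      intro k _
      set ck : ℝ := (b * (2:ℝ) ^ |m|) * (((2:ℝ) ^ m) ^ k * Real.exp (-(t * ((2:ℝ) ^ q) ^ k)))
        with hckdef
      have hck0 : 0 ≤ ck := by
        have h2mk : (0:ℝ) < (2:ℝ) ^ m := Real.rpow_pos_of_pos two_pos m
        positivity
    -- each term in the fiber is at most ck
      have hterm : ∀ ξ ∈ F.filter (fun ξ => g ξ = k),
          σ ξ * Real.exp (-t * w ξ ^ q) ≤ ck := by
        intro ξ hξ
        have hgk : g ξ = k := (Finset.mem_filter.mp hξ).2
        have hs1 : (2:ℝ) ^ k ≤ w ξ := hgk ▸ (hshell ξ).1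
        have hs2 : w ξ ≤ (2:ℝ) ^ (k + 1) := hgk ▸ (hshell ξ).2
        have hp2k : (0:ℝ) < (2:ℝ) ^ k := by positivity
        have hup : (w ξ) ^ m ≤ (2:ℝ) ^ |m| * ((2:ℝ) ^ k : ℝ) ^ m := by
          apply rpow_sandwich_upper hp2k one_le_two hs1 hs2
          rw [pow_succ]; ring_nf; exact le_rfl
        have hσup : σ ξ ≤ b * ((2:ℝ) ^ |m| * ((2:ℝ) ^ k : ℝ) ^ m) :=
          (hσ ξ).2.trans (mul_le_mul_of_nonneg_left hup hb.le)
        have hexp : Real.exp (-t * w ξ ^ q) ≤ Real.exp (-(t * ((2:ℝ) ^ q) ^ k)) := by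
          apply Real.exp_le_exp.mpr
          have : ((2:ℝ) ^ q) ^ k ≤ (w ξ) ^ q := by
            rw [← two_pow_rpow k q]
            exact Real.rpow_le_rpow hp2k.le hs1 hq.le
          nlinarith
        calc σ ξ * Real.exp (-t * w ξ ^ q)
            ≤ (b * ((2:ℝ) ^ |m| * ((2:ℝ) ^ k : ℝ) ^ m)) * Real.exp (-(t * ((2:ℝ) ^ q) ^ k)) :=
              mul_le_mul hσup hexp (Real.exp_pos _).le
                (by positivity)
        _ = ck := by rw [hckdef, two_pow_rpow k m]; ring
      have hcard : ((F.filter (fun ξ => g ξ = k)).card : ℝ)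
          ≤ (c₂ * (2:ℝ) ^ Q) * ((2:ℝ) ^ Q) ^ k := by
        have hlam1 : (1:ℝ) ≤ (2:ℝ) ^ (k+1) := one_le_pow₀ one_le_two
        have hsub : (↑(F.filter (fun ξ => g ξ = k)) : Set ι) ⊆ {ξ | w ξ ≤ (2:ℝ) ^ (k+1)} := by
          intro ξ hξ
          simp only [Finset.coe_filter, Set.mem_setOf_eq] at hξ ⊢
          exact hξ.2 ▸ (hshell ξ).2
        have hle := Set.ncard_le_ncard hsub (hfin _ hlam1)
        rw [Set.ncard_coe_finset] at hle
        have hNle := (hN ((2:ℝ) ^ (k+1)) hlam1).2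
        rw [show Nat.card {ξ // w ξ ≤ (2:ℝ) ^ (k+1)}
            = Nat.card ↥{ξ | w ξ ≤ (2:ℝ) ^ (k+1)} from rfl,
          Nat.card_coe_set_eq] at hNle
        have hrw : ((2:ℝ) ^ (k+1) : ℝ) ^ Q = (2:ℝ) ^ Q * ((2:ℝ) ^ Q) ^ k := by
          rw [two_pow_rpow (k+1) Q, pow_succ]; ring
        calc ((F.filter (fun ξ => g ξ = k)).card : ℝ)
            ≤ ({ξ | w ξ ≤ (2:ℝ) ^ (k+1)}.ncard : ℝ) := by exact_mod_cast hle
        _ ≤ c₂ * ((2:ℝ) ^ (k+1) : ℝ) ^ Q := hNle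
        _ = (c₂ * (2:ℝ) ^ Q) * ((2:ℝ) ^ Q) ^ k := by rw [hrw]; ring
      calc ∑ ξ ∈ F.filter (fun ξ => g ξ = k), σ ξ * Real.exp (-t * w ξ ^ q)
          ≤ (F.filter (fun ξ => g ξ = k)).card • ck :=
            Finset.sum_le_card_nsmul _ _ _ hterm
      _ = ((F.filter (fun ξ => g ξ = k)).card : ℝ) * ck := nsmul_eq_mul _ _
      _ ≤ ((c₂ * (2:ℝ) ^ Q) * ((2:ℝ) ^ Q) ^ k) * ck :=
            mul_le_mul_of_nonneg_right hcard hck0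
      _ = D * (((2:ℝ) ^ (Q + m)) ^ k * Real.exp (-(t * ((2:ℝ) ^ q) ^ k))) := by
            rw [hckdef, hDdef, Real.rpow_add two_pos, mul_pow]; ring
    calc ∑ k ∈ Finset.range M, ∑ ξ ∈ F.filter (fun ξ => g ξ = k),
          σ ξ * Real.exp (-t * w ξ ^ q)
        ≤ ∑ k ∈ Finset.range M,
            D * (((2:ℝ) ^ (Q + m)) ^ k * Real.exp (-(t * ((2:ℝ) ^ q) ^ k))) :=
          Finset.sum_le_sum hinner
    _ = D * ∑ k ∈ Finset.range M,
            ((2:ℝ) ^ (Q + m)) ^ k * Real.exp (-(t * ((2:ℝ) ^ q) ^ k)) := by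
          rw [Finset.mul_sum]
    _ ≤ D * (C₀ * t ^ (-((Q + m) / q))) :=
          mul_le_mul_of_nonneg_left (hC₀b t ht ht1 M) hD.le
    _ = (D * C₀) * t ^ (-((Q + m) / q)) := by ring
  have hsummable : ∀ t : ℝ, 0 < t → t ≤ 1 →
      Summable (fun ξ => σ ξ * Real.exp (-t * w ξ ^ q)) := by
    intro t ht ht1
    exact summable_of_sum_le (fun ξ => htermnn t ξ) (key t ht ht1)
  -- the constant K for the lower bound
  set K : ℝ := (2 * c₂ / c₁) ^ (1/Q) + 1 with hKdef
  have hKbase : (0:ℝ) < 2 * c₂ / c₁ := by positivity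
  have hK1 : 1 < K := by
    rw [hKdef]
    linarith [Real.rpow_pos_of_pos hKbase (1/Q)]
  have hK0 : (0:ℝ) < K := lt_trans one_pos hK1
  have hKQ : 2 * c₂ / c₁ ≤ K ^ Q := by
    have h1 : (2 * c₂ / c₁) ^ (1/Q) ≤ K := by rw [hKdef]; linarith
    have h2 := Real.rpow_le_rpow (Real.rpow_pos_of_pos hKbase (1/Q)).le h1 hQ.le
    rwa [← Real.rpow_mul hKbase.le, one_div, inv_mul_cancel₀ hQ.ne', Real.rpow_one] at h2
  have hKQ0 : (0:ℝ) < K ^ Q := Real.rpow_pos_of_pos hK0 Q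
  have hKm : (0:ℝ) < K ^ (-|m|) := Real.rpow_pos_of_pos hK0 _
  have hKr : (0:ℝ) < K ^ (-(Q+m)) := Real.rpow_pos_of_pos hK0 _
  refine ⟨min ((c₁/2) * (a * K ^ (-|m|) * Real.exp (-1)))
      (a * Real.exp (-1) * K ^ (-(Q+m))), D * C₀, ?_, by positivity, ?_⟩
  · apply lt_min
    · positivity
    · positivity
  intro t ht ht1
  set lam : ℝ := t ^ (-(1/q)) with hlamdef
  have hlam1 : 1 ≤ lam :=
    Real.one_le_rpow_of_pos_of_le_one_of_nonpos ht ht1 (by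
      apply neg_nonpos.mpr; positivity)
  have hlam0 : 0 < lam := lt_of_lt_of_le one_pos hlam1
  have hlamq : lam ^ q = t⁻¹ := by
    rw [hlamdef, ← Real.rpow_mul ht.le, ← Real.rpow_neg_one t]
    congr 1
    field_simp
  have htlamq : t * lam ^ q = 1 := by rw [hlamq, mul_inv_cancel₀ ht.ne']
  have hlamr : lam ^ (Q+m) = t ^ (-((Q+m) / q)) := by
    rw [hlamdef, ← Real.rpow_mul ht.le]
    norm_num
    ring_nf
  have htpow : (0:ℝ) < t ^ (-((Q+m)/q)) := Real.rpow_pos_of_pos ht _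
  constructor
  · -- LOWER BOUND
    rcases le_or_gt K lam with hKlam | hKlam
    · -- main case : lam ≥ K
      have hlamK1 : (1:ℝ) ≤ lam / K := by
        rw [le_div_iff₀ hK0]; linarith
      set S : Finset ι := (hfin lam hlam1).toFinset with hSdef
      set T : Finset ι := (hfin (lam/K) hlamK1).toFinset with hTdef
      have hTS : T ⊆ S := by
        intro ξ hξ
        simp only [hSdef, hTdef, Set.Finite.mem_toFinset, Set.mem_setOf_eq] at hξ ⊢
        calc w ξ ≤ lam / K := hξ
        _ ≤ lam := by
            rw [div_le_iff₀ hK0]; nlinarith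
      have hcardS : c₁ * lam ^ Q ≤ (S.card : ℝ) := by
        have h1 := (hN lam hlam1).1
        rw [show Nat.card {ξ // w ξ ≤ lam} = Nat.card ↥{ξ | w ξ ≤ lam} from rfl,
          Nat.card_coe_set_eq, Set.ncard_eq_toFinset_card _ (hfin lam hlam1)] at h1
        exact h1
      have hcardT : (T.card : ℝ) ≤ (c₁/2) * lam ^ Q := by
        have h1 := (hN (lam/K) hlamK1).2
        rw [show Nat.card {ξ // w ξ ≤ lam/K} = Nat.card ↥{ξ | w ξ ≤ lam/K} from rfl,
          Nat.card_coe_set_eq, Set.ncard_eq_toFinset_card _ (hfin (lam/K) hlamK1)] at h1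
        have h2 : c₂ * (lam / K) ^ Q ≤ (c₁/2) * lam ^ Q := by
          rw [Real.div_rpow hlam0.le hK0.le]
          have hlQ : (0:ℝ) < lam ^ Q := Real.rpow_pos_of_pos hlam0 Q
          have h3 : 2 * c₂ ≤ c₁ * K ^ Q := by
            rw [div_le_iff₀ hc₁] at hKQ
            linarith
          rw [← mul_div_assoc, div_le_iff₀ hKQ0]
          have h4 := mul_le_mul_of_nonneg_right h3 hlQ.le
          linarith
        linarith
      set G : Finset ι := S \ T with hGdef
      have hcardG : (c₁/2) * lam ^ Q ≤ (G.card : ℝ) := by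
        have h1 : G.card = S.card - T.card := Finset.card_sdiff_of_subset hTS
        have h2 : T.card ≤ S.card := Finset.card_le_card hTS
        have h3 : (G.card : ℝ) = (S.card : ℝ) - (T.card : ℝ) := by
          rw [h1, Nat.cast_sub h2]
        rw [h3]
        linarith
      have hGterm : ∀ ξ ∈ G, (a * K ^ (-|m|) * Real.exp (-1)) * lam ^ m
          ≤ σ ξ * Real.exp (-t * w ξ ^ q) := by
        intro ξ hξ
        simp only [hGdef, Finset.mem_sdiff, hSdef, hTdef, Set.Finite.mem_toFinset,
          Set.mem_setOf_eq, not_le] at hξ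
        obtain ⟨hξS, hξT⟩ := hξ
        have hxz : lam / K ≤ w ξ := le_of_lt hξT
        have hyK : lam ≤ K * (lam / K) := by
          rw [mul_div_cancel₀ _ hK0.ne']
        have hlow : K ^ (-|m|) * lam ^ m ≤ (w ξ) ^ m :=
          rpow_sandwich_lower (by positivity) hK1.le hxz hξS hyK
        have hσlow : a * (K ^ (-|m|) * lam ^ m) ≤ σ ξ :=
          le_trans (mul_le_mul_of_nonneg_left hlow ha.le) (hσ ξ).1
        have hexp : Real.exp (-1) ≤ Real.exp (-t * w ξ ^ q) := by
          apply Real.exp_le_exp.mpr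
          have h4 : (w ξ) ^ q ≤ lam ^ q := Real.rpow_le_rpow (hwpos ξ).le hξS hq.le
          nlinarith
        have hlm : (0:ℝ) < lam ^ m := Real.rpow_pos_of_pos hlam0 m
        calc (a * K ^ (-|m|) * Real.exp (-1)) * lam ^ m
            = (a * (K ^ (-|m|) * lam ^ m)) * Real.exp (-1) := by ring
        _ ≤ σ ξ * Real.exp (-t * w ξ ^ q) :=
            mul_le_mul hσlow hexp (Real.exp_pos _).le (hσpos ξ).le
      have hsumG : (G.card : ℝ) * ((a * K ^ (-|m|) * Real.exp (-1)) * lam ^ m)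
          ≤ ∑ ξ ∈ G, σ ξ * Real.exp (-t * w ξ ^ q) := by
        have := Finset.card_nsmul_le_sum G _ _ hGterm
        rwa [nsmul_eq_mul] at this
      have hGle : ∑ ξ ∈ G, σ ξ * Real.exp (-t * w ξ ^ q)
          ≤ ∑' ξ, σ ξ * Real.exp (-t * w ξ ^ q) :=
        Summable.sum_le_tsum G (fun ξ _ => htermnn t ξ) (hsummable t ht ht1)
      have hlm : (0:ℝ) < lam ^ m := Real.rpow_pos_of_pos hlam0 m
      have hconst : (0:ℝ) < a * K ^ (-|m|) * Real.exp (-1) := by positivity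
      calc min ((c₁/2) * (a * K ^ (-|m|) * Real.exp (-1)))
            (a * Real.exp (-1) * K ^ (-(Q+m))) * t ^ (-((Q + m) / q))
          ≤ ((c₁/2) * (a * K ^ (-|m|) * Real.exp (-1))) * t ^ (-((Q + m) / q)) :=
            mul_le_mul_of_nonneg_right (min_le_left _ _) htpow.le
      _ = ((c₁/2) * lam ^ Q) * ((a * K ^ (-|m|) * Real.exp (-1)) * lam ^ m) := by
            rw [← hlamr, Real.rpow_add hlam0]; ring
      _ ≤ (G.card : ℝ) * ((a * K ^ (-|m|) * Real.exp (-1)) * lam ^ m) := by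
            apply mul_le_mul_of_nonneg_right hcardG (by positivity)
      _ ≤ ∑ ξ ∈ G, σ ξ * Real.exp (-t * w ξ ^ q) := hsumG
      _ ≤ ∑' ξ, σ ξ * Real.exp (-t * w ξ ^ q) := hGle
    · -- small case : lam < K
      have hone : (1:ℝ) ≤ 1 := le_rfl
      have h1 := (hN 1 hone).1
      rw [Real.one_rpow, mul_one] at h1
      have hne : Nat.card {ξ // w ξ ≤ (1:ℝ)} ≠ 0 := by
        intro h
        rw [h] at h1
        norm_num at h1
        linarith
      obtain ⟨⟨ξ₀, hξ₀⟩⟩ := (Nat.card_ne_zero.mp hne).1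
      have hw1 : w ξ₀ = 1 := le_antisymm hξ₀ (hw ξ₀)
      have hterm0 : a * Real.exp (-1) ≤ σ ξ₀ * Real.exp (-t * w ξ₀ ^ q) := by
        have h2 : a ≤ σ ξ₀ := by
          have := (hσ ξ₀).1
          rwa [hw1, Real.one_rpow, mul_one] at this
        have h3 : Real.exp (-1) ≤ Real.exp (-t * w ξ₀ ^ q) := by
          apply Real.exp_le_exp.mpr
          rw [hw1, Real.one_rpow]
          linarith
        exact mul_le_mul h2 h3 (Real.exp_pos _).le (hσpos ξ₀).le
      have htsum0 : σ ξ₀ * Real.exp (-t * w ξ₀ ^ q)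
          ≤ ∑' ξ, σ ξ * Real.exp (-t * w ξ ^ q) :=
        Summable.le_tsum (hsummable t ht ht1) ξ₀ (fun ξ' _ => htermnn t ξ')
      have hpow : t ^ (-((Q+m)/q)) ≤ K ^ (Q+m) := by
        rw [← hlamr]
        exact Real.rpow_le_rpow hlam0.le hKlam.le hr.le
      have hKK : K ^ (-(Q+m)) * K ^ (Q+m) = 1 := by
        rw [← Real.rpow_add hK0, neg_add_cancel, Real.rpow_zero]
      calc min ((c₁/2) * (a * K ^ (-|m|) * Real.exp (-1)))
            (a * Real.exp (-1) * K ^ (-(Q+m))) * t ^ (-((Q + m) / q))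
          ≤ (a * Real.exp (-1) * K ^ (-(Q+m))) * t ^ (-((Q + m) / q)) :=
            mul_le_mul_of_nonneg_right (min_le_right _ _) htpow.le
      _ ≤ (a * Real.exp (-1) * K ^ (-(Q+m))) * K ^ (Q+m) := by
            apply mul_le_mul_of_nonneg_left hpow (by positivity)
      _ = a * Real.exp (-1) * (K ^ (-(Q+m)) * K ^ (Q+m)) := by ring
      _ = a * Real.exp (-1) := by rw [hKK, mul_one]
      _ ≤ σ ξ₀ * Real.exp (-t * w ξ₀ ^ q) := hterm0
      _ ≤ ∑' ξ, σ ξ * Real.exp (-t * w ξ ^ q) := htsum0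
  · -- UPPER BOUND
    exact Summable.tsum_le_of_sum_le (hsummable t ht ht1) (key t ht ht1)
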